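/- Let A ∈ ℝ^{n×n}, B ∈ ℝ^{n×m}, C2 ∈ ℝ^{p×n}, D2 ∈ ℝ^{p×m} with D2ᵀC2 = 0 and D2ᵀD2 = I_m. Let λ > 0, c > 0, and suppose P > 0 (symmetric positive definite) satisfies AᵀP + PA + (c²λ⁴ − 2cλ)PBBᵀP + λ⁴C2ᵀC2 < 0. Then with F := −cBᵀP, the Lyapunov-type inequality (A + λBF)ᵀP + P(A + λBF) + (λ²C2 + λ²D2F)ᵀ(λ²C2 + λ²D2F) < 0 holds. -/

import Mathlib

open Matrix

theorem riccati_implies_lyapunov {n m p : ℕ}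
    (A : Matrix (Fin n) (Fin n) ℝ) (B : Matrix (Fin n) (Fin m) ℝ)
    (C2 : Matrix (Fin p) (Fin n) ℝ) (D2 : Matrix (Fin p) (Fin m) ℝ)
    (hDC : D2ᵀ * C2 = 0) (hDD : D2ᵀ * D2 = 1)
    (lam c : ℝ) (hlam : 0 < lam) (hc : 0 < c)
    (P : Matrix (Fin n) (Fin n) ℝ) (hP : P.PosDef)
    (hric : (-(Aᵀ * P + P * A + (c ^ 2 * lam ^ 4 - 2 * c * lam) • (P * B * Bᵀ * P)
        + lam ^ 4 • (C2ᵀ * C2))).PosDef)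
    (F : Matrix (Fin m) (Fin n) ℝ) (hF : F = -(c • (Bᵀ * P))) :
    (-((A + lam • (B * F))ᵀ * P + P * (A + lam • (B * F))
      + (lam ^ 2 • C2 + lam ^ 2 • (D2 * F))ᵀ
        * (lam ^ 2 • C2 + lam ^ 2 • (D2 * F)))).PosDef := by
  have hPt : Pᵀ = P := by
    have := hP.isHermitian
    simpa [Matrix.IsHermitian, Matrix.conjTranspose_eq_transpose_of_trivial] using this
  have hCD : C2ᵀ * D2 = 0 := by
    calc C2ᵀ * D2 = (D2ᵀ * C2)ᵀ := by simp [Matrix.transpose_mul]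
    _ = 0 := by rw [hDC]; simp
  have key : (-((A + lam • (B * F))ᵀ * P + P * (A + lam • (B * F))
      + (lam ^ 2 • C2 + lam ^ 2 • (D2 * F))ᵀ
        * (lam ^ 2 • C2 + lam ^ 2 • (D2 * F))))
      = (-(Aᵀ * P + P * A + (c ^ 2 * lam ^ 4 - 2 * c * lam) • (P * B * Bᵀ * P)
        + lam ^ 4 • (C2ᵀ * C2))) := by
    subst hF
    simp only [Matrix.transpose_add, Matrix.transpose_smul, Matrix.transpose_neg,
      Matrix.transpose_mul, Matrix.transpose_transpose, hPt,
      Matrix.add_mul, Matrix.mul_add, Matrix.smul_mul, Matrix.mul_smul,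
      Matrix.neg_mul, Matrix.mul_neg, smul_neg, neg_neg, Matrix.mul_assoc]
    rw [show P * (B * (D2ᵀ * (D2 * (Bᵀ * P)))) = P * (B * (Bᵀ * P)) by
      rw [← Matrix.mul_assoc D2ᵀ, hDD, Matrix.one_mul]]
    rw [show C2ᵀ * (D2 * (Bᵀ * P)) = 0 by rw [← Matrix.mul_assoc, hCD, Matrix.zero_mul]]
    rw [show P * (B * (D2ᵀ * C2)) = 0 by rw [hDC, Matrix.mul_zero, Matrix.mul_zero]]
    module
  rw [key]; exact hric
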